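/- Let X be a finite clique complex, q ≥ 1, and suppose X is q-clique-minimal, meaning β_q(X) > 0 but every proper clique subcomplex Y ⊊ X induced by a subgraph of the 1-skeleton has β_q(Y) = 0. Then every vertex of X has degree at least 2q in the 1-skeleton of X, and X has at least 2q + 2 vertices. -/

import Mathlib

open Finset

/-- The `q`-dimensional simplices of the clique complex of `G`: cliques with `q+1`
vertices. -/
def CliqueSimplex {V : Type} [Fintype V] [DecidableEq V] (G : SimpleGraph V) (q : ℕ) :
    Type :=
  {σ : Finset V // G.IsClique (σ : Set V) ∧ σ.card = q + 1}

noncomputable instance {V : Type} [Fintype V] [DecidableEq V] (G : SimpleGraph V)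
    (q : ℕ) : Fintype (CliqueSimplex G q) := by
  classical
  unfold CliqueSimplex
  infer_instance

/-- The simplicial chain group of the clique complex of `G` in dimension `q`, with
`ℤ/2` coefficients. -/
abbrev CliqueChain {V : Type} [Fintype V] [DecidableEq V] (G : SimpleGraph V)
    (q : ℕ) : Type :=
  CliqueSimplex G q → ZMod 2

/-- The simplicial boundary map (over `ℤ/2`) of the clique complex of `G`, from
dimension `q` to dimension `q - 1`: the boundary of a `q`-simplex is the sum of its
facets, i.e. its proper subsets of cardinality `q` (which are automatically cliques). -/
noncomputable def cliqueBoundary {V : Type} [Fintype V] [DecidableEq V]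
    (G : SimpleGraph V) (q : ℕ) : CliqueChain G q →ₗ[ZMod 2] CliqueChain G (q - 1) where
  toFun f τ := ∑ σ : CliqueSimplex G q, if (τ.1 : Finset V) ⊂ σ.1 then f σ else 0
  map_add' f g := by
    funext τ
    simp only [Pi.add_apply]
    rw [← Finset.sum_add_distrib]
    exact Finset.sum_congr rfl fun σ _ => by split_ifs <;> simp
  map_smul' c f := by
    funext τ
    simp only [Pi.smul_apply, RingHom.id_apply, smul_eq_mul]
    rw [Finset.mul_sum]
    exact Finset.sum_congr rfl fun σ _ => by split_ifs <;> simp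

/-- The `q`-th Betti number (over `ℤ/2`) of the clique complex of `G`, for `q ≥ 1`:
the dimension of the `q`-th simplicial homology, i.e. of the space of `q`-cycles
modulo `q`-boundaries. -/
noncomputable def cliqueBetti {V : Type} [Fintype V] [DecidableEq V]
    (G : SimpleGraph V) (q : ℕ) : ℕ :=
  Module.finrank (ZMod 2)
    (LinearMap.ker (cliqueBoundary G q) ⧸
      (LinearMap.range (cliqueBoundary G (q + 1))).comap
        (LinearMap.ker (cliqueBoundary G q)).subtype)

attribute [local instance 2] Classical.propDecidable

section Toolkit

variable {V : Type} [Fintype V] [DecidableEq V]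

/-- Evaluation of a chain on an arbitrary finset (0 if not a simplex). -/
noncomputable def ec {G : SimpleGraph V} {m : ℕ} (f : CliqueChain G m) (s : Finset V) : ZMod 2 :=
  if h : G.IsClique (s : Set V) ∧ s.card = m + 1 then f ⟨s, h⟩ else 0

variable {G : SimpleGraph V} {m : ℕ}

lemma boundary_apply (f : CliqueChain G m) (τ : CliqueSimplex G (m-1)) :
    cliqueBoundary G m f τ = ∑ σ : CliqueSimplex G m, if (τ.1 : Finset V) ⊂ σ.1 then f σ else 0 :=
  rfl

lemma ec_simplex (f : CliqueChain G m) (σ : CliqueSimplex G m) : ec f σ.1 = f σ := by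
  rw [ec, dif_pos σ.2]
  rfl


lemma ec_clique (f : CliqueChain G m) {s : Finset V} (h : G.IsClique (s : Set V) ∧ s.card = m + 1) :
    ec f s = f ⟨s, h⟩ := dif_pos h

lemma ec_of_ne (f : CliqueChain G m) {s : Finset V}
    (h : ¬ (G.IsClique (s : Set V) ∧ s.card = m + 1)) : ec f s = 0 := dif_neg h

lemma isClique_of_ec_ne (f : CliqueChain G m) {s : Finset V} (h : ec f s ≠ 0) :
    G.IsClique (s : Set V) ∧ s.card = m + 1 := by
  by_contra hc; exact h (ec_of_ne f hc)

lemma ec_add (f g : CliqueChain G m) (s : Finset V) : ec (f + g) s = ec f s + ec g s := by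
  unfold ec; split_ifs
  · rfl
  · simp

lemma chain_ext {f g : CliqueChain G m} (h : ∀ s, ec f s = ec g s) : f = g := by
  funext σ; rw [← ec_simplex f σ, ← ec_simplex g σ]; exact h σ.1

lemma sum_simplex (g : Finset V → ZMod 2) :
    ∑ σ : CliqueSimplex G m, g σ.1
      = ∑ s ∈ (Finset.univ : Finset (Finset V)).filter
          (fun s : Finset V => G.IsClique (s : Set V) ∧ s.card = m + 1), g s :=
  (Finset.sum_subtype _ (by simp) g).symm

/-- The boundary formula: the boundary of `f` evaluated at a simplex `τ` is the
sum over all vertices `x` of `f` on `insert x τ`. -/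
lemma boundary_eval (hm : 1 ≤ m) (f : CliqueChain G m) (τ : CliqueSimplex G (m - 1)) :
    cliqueBoundary G m f τ = ∑ x : V, ec f (insert x τ.1) := by
  have hcard : τ.1.card = m := by
    have := τ.2.2; omega
  -- LHS as a sum over finsets
  have h1 : cliqueBoundary G m f τ
      = ∑ s ∈ (Finset.univ : Finset (Finset V)).filter
          (fun s : Finset V => G.IsClique (s : Set V) ∧ s.card = m + 1),
          (if τ.1 ⊂ s then ec f s else 0) := by
    rw [boundary_apply]
    rw [show (∑ σ : CliqueSimplex G m, if (τ.1 : Finset V) ⊂ σ.1 then f σ else 0)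
        = ∑ σ : CliqueSimplex G m,
            (fun s : Finset V => if (τ.1 : Finset V) ⊂ s then ec f s else 0) σ.1 from
      Finset.sum_congr rfl fun σ _ => by
        show (if (τ.1 : Finset V) ⊂ σ.1 then f σ else 0)
          = if (τ.1 : Finset V) ⊂ σ.1 then ec f σ.1 else 0
        rw [ec_simplex]]
    exact sum_simplex (fun s : Finset V => if (τ.1 : Finset V) ⊂ s then ec f s else 0)
  rw [h1]
  rw [Finset.sum_filter]
  -- now both sides are sums of `ec f` with guards; compare via image reindexing
  have h2 : ∑ s : Finset V, (if G.IsClique (s : Set V) ∧ s.card = m + 1 then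
        (if τ.1 ⊂ s then ec f s else 0) else 0)
      = ∑ s ∈ (Finset.univ : Finset (Finset V)).filter (fun s : Finset V => τ.1 ⊂ s ∧ s.card = m + 1),
        ec f s := by
    rw [Finset.sum_filter]
    refine Finset.sum_congr rfl fun s _ => ?_
    by_cases h3 : τ.1 ⊂ s ∧ s.card = m + 1
    · rcases h3 with ⟨h3, h4⟩
      by_cases h5 : G.IsClique (s : Set V)
      · simp [h3, h4, h5]
      · simp only [if_pos (And.intro h3 h4)]
        rw [ec_of_ne f (by tauto), if_neg (by tauto)]
    · by_cases h5 : G.IsClique (s : Set V) ∧ s.card = m + 1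
      · have : ¬ τ.1 ⊂ s := by tauto
        simp [h5, this, h3]
      · simp [h5, h3]
  rw [h2]
  -- RHS: kill terms x ∈ τ, then image bijection
  have h4 : ∀ x ∈ τ.1, ec f (insert x τ.1) = 0 := by
    intro x hx
    apply ec_of_ne
    rw [Finset.insert_eq_self.2 hx, hcard]
    omega
  rw [← Finset.sum_filter_add_sum_filter_not Finset.univ (fun x => x ∈ τ.1)
    (fun x => ec f (insert x τ.1))]
  rw [Finset.sum_eq_zero (fun x hx => h4 x (Finset.mem_filter.1 hx).2), zero_add]
  refine (Finset.sum_bij (fun (x : V) _ => insert x τ.1) ?_ ?_ ?_ ?_).symm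
  · intro x hx
    simp only [Finset.mem_filter, Finset.mem_univ, true_and] at hx ⊢
    exact ⟨Finset.ssubset_insert hx, by rw [Finset.card_insert_of_notMem hx, hcard]⟩
  · intro x hx y hy hxy
    simp only [Finset.mem_filter, Finset.mem_univ, true_and] at hx hy
    have h5 : insert x τ.1 = insert y τ.1 := hxy
    have : x ∈ insert y τ.1 := h5 ▸ Finset.mem_insert_self x τ.1
    rcases Finset.mem_insert.1 this with h | h
    · exact h
    · exact absurd h hx
  · intro s hs
    simp only [Finset.mem_filter, Finset.mem_univ, true_and] at hs
    obtain ⟨hsub, hc⟩ := hs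
    have hne : (s \ τ.1).Nonempty := by
      rw [← Finset.card_pos, Finset.card_sdiff_of_subset hsub.subset, hc, hcard]; omega
    obtain ⟨x, hx⟩ := hne
    rw [Finset.mem_sdiff] at hx
    refine ⟨x, by simp [hx.2], ?_⟩
    apply Finset.eq_of_subset_of_card_le
    · exact Finset.insert_subset hx.1 hsub.subset
    · rw [Finset.card_insert_of_notMem hx.2, hc, hcard]
  · intro x hx
    rfl

lemma boundary_zero_dim (f : CliqueChain G 0) : cliqueBoundary G 0 f = 0 := by
  funext τ
  show cliqueBoundary G 0 f τ = 0
  rw [boundary_apply]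
  refine Finset.sum_eq_zero fun σ _ => ?_
  rw [if_neg]
  intro h
  have h1 := Finset.card_lt_card h
  rw [τ.2.2, σ.2.2] at h1
  omega

end Toolkit
section Toolkit2

attribute [local instance 2] Classical.propDecidable

variable {V : Type} [Fintype V] [DecidableEq V] {G : SimpleGraph V} {m n : ℕ}

lemma ec_zero (s : Finset V) : ec (0 : CliqueChain G m) s = 0 := by
  unfold ec; split_ifs <;> rfl

/-- The set of vertices appearing in the support of a chain. -/
noncomputable def vsupp (f : CliqueChain G m) : Finset V :=
  (Finset.univ : Finset (Finset V)).biUnion (fun s => if ec f s ≠ 0 then s else ∅)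

lemma mem_vsupp {f : CliqueChain G m} {u : V} :
    u ∈ vsupp f ↔ ∃ s : Finset V, ec f s ≠ 0 ∧ u ∈ s := by
  unfold vsupp
  simp only [Finset.mem_biUnion, Finset.mem_univ, true_and]
  constructor
  · rintro ⟨s, hs⟩
    by_cases h : ec f s ≠ 0
    · rw [if_pos h] at hs; exact ⟨s, h, hs⟩
    · rw [if_neg h] at hs; exact absurd hs (Finset.notMem_empty u)
  · rintro ⟨s, h1, h2⟩
    exact ⟨s, by rw [if_pos h1]; exact h2⟩

lemma subset_vsupp {f : CliqueChain G m} {s : Finset V} (h : ec f s ≠ 0) : s ⊆ vsupp f :=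
  fun _ hx => mem_vsupp.2 ⟨s, h, hx⟩

lemma vsupp_subset {f : CliqueChain G m} {A : Finset V}
    (h : ∀ s : Finset V, ec f s ≠ 0 → s ⊆ A) : vsupp f ⊆ A := by
  intro u hu
  obtain ⟨s, h1, h2⟩ := mem_vsupp.1 hu
  exact h s h1 h2

lemma eq_zero_of_vsupp_empty {f : CliqueChain G m} (h : vsupp f = ∅) : f = 0 := by
  funext σ
  by_contra hne
  have h1 : ec f σ.1 ≠ 0 := by rw [ec_simplex]; exact hne
  have h2 : σ.1.Nonempty := by
    rw [← Finset.card_pos, σ.2.2]; omega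
  obtain ⟨x, hx⟩ := h2
  have := subset_vsupp h1 hx
  rw [h] at this
  exact Finset.notMem_empty x this

lemma vsupp_add (f g : CliqueChain G m) : vsupp (f + g) ⊆ vsupp f ∪ vsupp g := by
  refine vsupp_subset fun s hs x hx => ?_
  rw [ec_add] at hs
  rcases (by by_contra hco; push_neg at hco; rw [hco.1, hco.2, add_zero] at hs; exact hs rfl :
    ec f s ≠ 0 ∨ ec g s ≠ 0) with h | h
  · exact Finset.mem_union_left _ (subset_vsupp h hx)
  · exact Finset.mem_union_right _ (subset_vsupp h hx)

/-- The link chain of `z` at `u`: `ρ ↦ z (insert u ρ)`. -/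
noncomputable def lnk (u : V) (f : CliqueChain G (n + 1)) : CliqueChain G n :=
  fun ρ => if u ∉ ρ.1 then ec f (insert u ρ.1) else 0

/-- The cone of a chain at `u`: `α ↦ f (α.erase u)` if `u ∈ α`. -/
noncomputable def cone (u : V) (f : CliqueChain G n) : CliqueChain G (n + 1) :=
  fun α => if u ∈ α.1 then ec f (α.1.erase u) else 0

/-- The part of a chain away from `u`. -/
noncomputable def zoff (u : V) (f : CliqueChain G m) : CliqueChain G m :=
  fun σ => if u ∈ σ.1 then 0 else f σ

lemma ec_lnk (u : V) (f : CliqueChain G (n + 1)) (s : Finset V) :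
    ec (lnk u f) s = if G.IsClique (s : Set V) ∧ s.card = n + 1 ∧ u ∉ s
      then ec f (insert u s) else 0 := by
  unfold ec lnk
  by_cases h1 : G.IsClique (s : Set V) ∧ s.card = n + 1
  · rw [dif_pos (by exact h1)]
    by_cases h2 : u ∈ s
    · rw [if_neg (by simp [h2]), if_neg (by tauto)]
    · rw [if_pos h2, if_pos ⟨h1.1, h1.2, h2⟩]
      rfl
  · rw [dif_neg (by exact h1), if_neg (by tauto)]

lemma ec_cone (u : V) (f : CliqueChain G n) (s : Finset V) :
    ec (cone u f) s = if G.IsClique (s : Set V) ∧ s.card = n + 2 ∧ u ∈ s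
      then ec f (s.erase u) else 0 := by
  unfold ec cone
  by_cases h1 : G.IsClique (s : Set V) ∧ s.card = n + 1 + 1
  · rw [dif_pos h1]
    by_cases h2 : u ∈ s
    · rw [if_pos h2, if_pos ⟨h1.1, h1.2, h2⟩]
      rfl
    · rw [if_neg h2, if_neg (by tauto)]
  · rw [dif_neg h1, if_neg (by tauto)]

lemma ec_zoff (u : V) (f : CliqueChain G m) (s : Finset V) :
    ec (zoff u f) s = if u ∈ s then 0 else ec f s := by
  unfold ec zoff
  by_cases h1 : G.IsClique (s : Set V) ∧ s.card = m + 1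
  · rw [dif_pos h1, dif_pos h1]
  · rw [dif_neg h1, dif_neg h1]
    simp

lemma isClique_insert_of_adj {u : V} {s : Finset V} (hs : G.IsClique (s : Set V))
    (h : ∀ x ∈ s, G.Adj u x) : G.IsClique ((insert u s : Finset V) : Set V) := by
  rw [Finset.coe_insert]
  intro a ha b hb hab
  rcases ha with rfl | ha
  · rcases hb with rfl | hb
    · exact absurd rfl hab
    · exact h b hb
  · rcases hb with rfl | hb
    · exact (h a ha).symm
    · exact hs ha hb hab

lemma isClique_of_subset {s t : Finset V} (h : s ⊆ t) (ht : G.IsClique (t : Set V)) :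
    G.IsClique (s : Set V) :=
  ht.subset (by exact_mod_cast h)

lemma vsupp_lnk (u : V) (z : CliqueChain G (n + 1)) :
    ∀ s : Finset V, ec (lnk u z) s ≠ 0 → u ∉ s ∧ s ⊆ vsupp z ∧ ∀ x ∈ s, G.Adj u x := by
  intro s hs
  rw [ec_lnk] at hs
  by_cases h1 : G.IsClique (s : Set V) ∧ s.card = n + 1 ∧ u ∉ s
  · rw [if_pos h1] at hs
    have h2 := isClique_of_ec_ne _ hs
    refine ⟨h1.2.2, fun x hx => subset_vsupp hs (Finset.mem_insert_of_mem hx), fun x hx => ?_⟩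
    have hclique := h2.1
    rw [Finset.coe_insert] at hclique
    exact hclique (Set.mem_insert u _) (Set.mem_insert_of_mem _ hx)
      (by rintro rfl; exact h1.2.2 hx)
  · rw [if_neg h1] at hs; exact absurd rfl hs

lemma lnk_ne_zero {u : V} {z : CliqueChain G (n + 1)} (h : u ∈ vsupp z) :
    ∃ s : Finset V, ec (lnk u z) s ≠ 0 := by
  obtain ⟨s, h1, h2⟩ := mem_vsupp.1 h
  refine ⟨s.erase u, ?_⟩
  rw [ec_lnk]
  obtain ⟨hcl, hcard⟩ := isClique_of_ec_ne _ h1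
  rw [if_pos ⟨isClique_of_subset (Finset.erase_subset u s) hcl,
    by rw [Finset.card_erase_of_mem h2, hcard]; omega, Finset.notMem_erase u s⟩,
    Finset.insert_erase h2]
  exact h1

lemma vsupp_cone (u : V) (f : CliqueChain G n) : vsupp (cone u f) ⊆ insert u (vsupp f) := by
  refine vsupp_subset fun s hs x hx => ?_
  rw [ec_cone] at hs
  by_cases h1 : G.IsClique (s : Set V) ∧ s.card = n + 2 ∧ u ∈ s
  · rw [if_pos h1] at hs
    by_cases hxu : x = u
    · rw [hxu]; exact Finset.mem_insert_self u _
    · exact Finset.mem_insert_of_mem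
        (subset_vsupp hs (Finset.mem_erase.2 ⟨hxu, hx⟩))
  · rw [if_neg h1] at hs; exact absurd rfl hs

lemma vsupp_zoff (u : V) (f : CliqueChain G m) :
    vsupp (zoff u f) ⊆ (vsupp f).erase u := by
  refine vsupp_subset fun s hs x hx => ?_
  rw [ec_zoff] at hs
  by_cases h1 : u ∈ s
  · rw [if_pos h1] at hs; exact absurd rfl hs
  · rw [if_neg h1] at hs
    exact Finset.mem_erase.2 ⟨fun h => h1 (by rw [← h]; exact hx), subset_vsupp hs hx⟩

lemma zoff_of_not_mem {u : V} {f : CliqueChain G m} {σ : CliqueSimplex G m}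
    (h : u ∉ σ.1) : zoff u f σ = f σ := if_neg h

/-- A chain decomposes as the cone on its link plus its off-`u` part. -/
lemma decomp (u : V) (z : CliqueChain G (n + 1)) :
    z = cone u (lnk u z) + zoff u z := by
  funext σ
  show z σ = cone u (lnk u z) σ + zoff u z σ
  by_cases h : u ∈ σ.1
  · unfold cone zoff
    rw [if_pos h, if_pos h, add_zero, ec_lnk]
    have h2 := σ.2
    rw [if_pos ⟨isClique_of_subset (Finset.erase_subset u σ.1) h2.1,
      by rw [Finset.card_erase_of_mem h, h2.2]; omega, Finset.notMem_erase u σ.1⟩,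
      Finset.insert_erase h, ec_simplex]
  · unfold cone zoff
    rw [if_neg h, if_neg h, zero_add]

end Toolkit2
section Toolkit3

attribute [local instance 2] Classical.propDecidable
set_option linter.unusedSectionVars false

variable {V : Type} [Fintype V] [DecidableEq V] {G : SimpleGraph V} {n : ℕ}

lemma cone_boundary_off (u : V) (f : CliqueChain G n)
    (hsupp : ∀ s : Finset V, ec f s ≠ 0 → ∀ x ∈ s, G.Adj u x)
    (β : CliqueSimplex G n) (hu : u ∉ β.1) :
    cliqueBoundary G (n + 1) (cone u f) β = f β := by
  rw [boundary_eval (by omega) (cone u f) β]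
  rw [Fintype.sum_eq_single u (fun x hx => by
    rw [ec_cone, if_neg]
    rintro ⟨-, -, hmem⟩
    rcases Finset.mem_insert.1 hmem with h | h
    · exact hx h.symm
    · exact hu h)]
  rw [ec_cone, Finset.erase_insert hu]
  by_cases hcl : G.IsClique ((insert u β.1 : Finset V) : Set V)
  · rw [if_pos ⟨hcl, by rw [Finset.card_insert_of_notMem hu, β.2.2], Finset.mem_insert_self u _⟩]
    exact ec_simplex f β
  · rw [if_neg (by tauto)]
    by_contra hne
    have h1 : ec f β.1 ≠ 0 := by rw [ec_simplex]; exact fun h => hne h.symm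
    exact hcl (isClique_insert_of_adj β.2.1 (hsupp β.1 h1))

lemma cone_boundary_mem (u : V) (f : CliqueChain G (n + 1))
    (hsupp : ∀ s : Finset V, ec f s ≠ 0 → ∀ x ∈ s, G.Adj u x)
    (β : CliqueSimplex G (n + 1)) (hu : u ∈ β.1) :
    cliqueBoundary G (n + 2) (cone u f) β
      = ec (cliqueBoundary G (n + 1) f) (β.1.erase u) := by
  have hcard : β.1.card = n + 2 := β.2.2
  have herase : (β.1.erase u).card = n + 1 := by
    rw [Finset.card_erase_of_mem hu, hcard]; omega
  have hecl : G.IsClique ((β.1.erase u : Finset V) : Set V) :=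
    isClique_of_subset (Finset.erase_subset u β.1) β.2.1
  rw [boundary_eval (by omega) (cone u f) β,
    ec_clique _ ⟨hecl, herase⟩,
    boundary_eval (by omega) f ⟨β.1.erase u, hecl, herase⟩]
  refine Finset.sum_congr rfl fun x _ => ?_
  show ec (cone u f) (insert x β.1) = ec f (insert x (β.1.erase u))
  by_cases hx : x ∈ β.1
  · rw [ec_cone, if_neg (by
      rintro ⟨-, hc, -⟩
      rw [Finset.insert_eq_self.2 hx, hcard] at hc
      omega)]
    by_cases hxu : x = u
    · subst hxu
      rw [Finset.insert_erase hu]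
      by_contra hne
      have h1 : ec f β.1 ≠ 0 := fun h => hne h.symm
      exact G.loopless.irrefl x (hsupp β.1 h1 x hu)
    · rw [ec_of_ne f (by
        rintro ⟨-, hc⟩
        rw [Finset.insert_eq_self.2 (Finset.mem_erase.2 ⟨hxu, hx⟩), herase] at hc
        omega)]
  · have hxu : x ≠ u := fun h => hx (h ▸ hu)
    have hins : (insert x β.1).erase u = insert x (β.1.erase u) :=
      Finset.erase_insert_of_ne hxu
    have hcins : (insert x β.1).card = n + 3 := by
      rw [Finset.card_insert_of_notMem hx, hcard]
    rw [ec_cone]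
    by_cases hcl : G.IsClique ((insert x β.1 : Finset V) : Set V)
    · rw [if_pos ⟨hcl, hcins, Finset.mem_insert_of_mem hu⟩, hins]
    · rw [if_neg (by tauto)]
      by_contra hne
      have hne' : ec f (insert x (β.1.erase u)) ≠ 0 := fun h => hne h.symm
      have hcl2 := (isClique_of_ec_ne f hne').1
      have hadj := hsupp _ hne'
      have : G.IsClique ((insert u (insert x (β.1.erase u)) : Finset V) : Set V) :=
        isClique_insert_of_adj hcl2 hadj
      have heq : insert u (insert x (β.1.erase u)) = insert x β.1 := by
        rw [Finset.insert_comm, Finset.insert_erase hu]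
      rw [heq] at this
      exact hcl this

lemma lnk_cycle (u : V) (z : CliqueChain G (n + 2))
    (hz : cliqueBoundary G (n + 2) z = 0) :
    cliqueBoundary G (n + 1) (lnk u z) = 0 := by
  funext t
  show cliqueBoundary G (n + 1) (lnk u z) t = 0
  rw [boundary_eval (by omega) (lnk u z) t]
  have htcard : t.1.card = n + 1 := t.2.2
  by_cases hut : u ∈ t.1
  · refine Finset.sum_eq_zero fun x _ => ?_
    rw [ec_lnk, if_neg (by
      rintro ⟨-, -, hmem⟩
      exact hmem (Finset.mem_insert_of_mem hut))]
  · by_cases hcl : G.IsClique ((insert u t.1 : Finset V) : Set V)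
    · set ρ : CliqueSimplex G (n + 1) := ⟨insert u t.1, hcl,
        by rw [Finset.card_insert_of_notMem hut, htcard]⟩ with hρdef
      have h0 : cliqueBoundary G (n + 2) z ρ = 0 := by rw [hz]; rfl
      rw [boundary_eval (by omega) z ρ] at h0
      rw [← h0]
      refine Finset.sum_congr rfl fun x _ => ?_
      show ec (lnk u z) (insert x t.1) = ec z (insert x (insert u t.1))
      by_cases hxu : x = u
      · subst hxu
        rw [ec_lnk, if_neg (by rintro ⟨-, -, h⟩; exact h (Finset.mem_insert_self x _)),
          Finset.insert_idem, ec_of_ne z (by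
            rintro ⟨-, hc⟩
            rw [Finset.card_insert_of_notMem hut, htcard] at hc
            omega)]
      · by_cases hxt : x ∈ t.1
        · rw [ec_lnk, if_neg (by
            rintro ⟨-, hc, -⟩
            rw [Finset.insert_eq_self.2 hxt, htcard] at hc
            omega), ec_of_ne z (by
            rintro ⟨-, hc⟩
            have : x ∈ insert u t.1 := Finset.mem_insert_of_mem hxt
            rw [Finset.insert_eq_self.2 this, Finset.card_insert_of_notMem hut, htcard] at hc
            omega)]
        · rw [ec_lnk]
          by_cases hcl2 : G.IsClique ((insert x t.1 : Finset V) : Set V)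
          · rw [if_pos ⟨hcl2, by rw [Finset.card_insert_of_notMem hxt, htcard],
              fun h => (Finset.mem_insert.1 h).elim (fun h => hxu h.symm) hut⟩,
              Finset.insert_comm]
          · rw [if_neg (by tauto), eq_comm]
            apply ec_of_ne
            rintro ⟨hc, -⟩
            refine hcl2 (isClique_of_subset ?_ hc)
            intro y hy
            rcases Finset.mem_insert.1 hy with rfl | hy
            · exact Finset.mem_insert_self y _
            · exact Finset.mem_insert_of_mem (Finset.mem_insert_of_mem hy)
    · refine Finset.sum_eq_zero fun x _ => ?_
      rw [ec_lnk]
      by_cases hg : G.IsClique ((insert x t.1 : Finset V) : Set V) ∧ (insert x t.1).card = n + 1 + 1 ∧ u ∉ insert x t.1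
      · rw [if_pos hg]
        apply ec_of_ne
        rintro ⟨hc, -⟩
        refine hcl (isClique_of_subset ?_ hc)
        intro y hy
        rcases Finset.mem_insert.1 hy with rfl | hy
        · exact Finset.mem_insert_self y _
        · exact Finset.mem_insert_of_mem (Finset.mem_insert_of_mem hy)
      · rw [if_neg hg]

lemma isClique_singleton' (x : V) : G.IsClique (({x} : Finset V) : Set V) := by
  rw [Finset.coe_singleton]
  exact fun a ha b hb hab => absurd (ha.trans hb.symm) hab

lemma sum_singletons (w : CliqueChain G 0) :
    ∑ x : V, ec w {x} = ∑ ρ : CliqueSimplex G 0, w ρ := by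
  have h1 : (∑ ρ : CliqueSimplex G 0, w ρ)
      = ∑ s ∈ (Finset.univ : Finset (Finset V)).filter
          (fun s : Finset V => G.IsClique (s : Set V) ∧ s.card = 0 + 1), ec w s := by
    rw [show (∑ ρ : CliqueSimplex G 0, w ρ)
        = ∑ ρ : CliqueSimplex G 0, (fun s : Finset V => ec w s) ρ.1 from
      Finset.sum_congr rfl fun ρ _ => (ec_simplex w ρ).symm]
    exact sum_simplex (fun s : Finset V => ec w s)
  rw [h1]
  refine Finset.sum_bij (fun (x : V) _ => ({x} : Finset V)) ?_ ?_ ?_ ?_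
  · intro x _
    simp only [Finset.mem_filter, Finset.mem_univ, true_and]
    exact ⟨isClique_singleton' x, Finset.card_singleton x⟩
  · intro x _ y _ h
    exact Finset.singleton_injective h
  · intro s hs
    simp only [Finset.mem_filter, Finset.mem_univ, true_and] at hs
    obtain ⟨x, rfl⟩ := Finset.card_eq_one.1 hs.2
    exact ⟨x, Finset.mem_univ x, rfl⟩
  · intro x _
    rfl

lemma sum_lnk (u : V) (z : CliqueChain G 1) (hz : cliqueBoundary G 1 z = 0) :
    ∑ ρ : CliqueSimplex G 0, lnk u z ρ = 0 := by
  have h0 : cliqueBoundary G 1 z ⟨{u}, isClique_singleton' u, Finset.card_singleton u⟩ = 0 := by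
    rw [hz]; rfl
  have h0 := (boundary_eval (by omega) z _).symm.trans h0
  rw [← sum_singletons (lnk u z), ← h0]
  refine Finset.sum_congr rfl fun x _ => ?_
  show ec (lnk u z) {x} = ec z (insert x ({u} : Finset V))
  by_cases hxu : x = u
  · subst hxu
    rw [ec_lnk, if_neg (by rintro ⟨-, -, h⟩; exact h (Finset.mem_singleton_self x)), eq_comm]
    apply ec_of_ne
    rintro ⟨-, hc⟩
    rw [Finset.insert_eq_self.2 (Finset.mem_singleton_self x), Finset.card_singleton] at hc
    omega
  · rw [ec_lnk, if_pos ⟨isClique_singleton' x, Finset.card_singleton x,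
      fun h => hxu (Finset.mem_singleton.1 h).symm⟩,
      show (insert u ({x} : Finset V)) = insert x ({u} : Finset V) from Finset.pair_comm u x]

/-- The boundary of the cone on a cycle supported in the neighborhood of `u`
is the cycle itself (positive-dimensional case). -/
lemma cone_boundary_full_succ (u : V) (w : CliqueChain G (n + 1))
    (hsupp : ∀ s : Finset V, ec w s ≠ 0 → ∀ x ∈ s, G.Adj u x)
    (hcyc : cliqueBoundary G (n + 1) w = 0) :
    cliqueBoundary G (n + 2) (cone u w) = w := by
  funext β
  show cliqueBoundary G (n + 2) (cone u w) β = w β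
  by_cases hu : u ∈ β.1
  · rw [cone_boundary_mem u w hsupp β hu, hcyc, ec_zero, eq_comm]
    by_contra hne
    exact G.loopless.irrefl u (hsupp β.1 (by rw [ec_simplex]; exact hne) u hu)
  · exact cone_boundary_off u w hsupp β hu

/-- The boundary of the cone on an even 0-chain supported in the neighborhood of `u`
is the chain itself. -/
lemma cone_boundary_full_zero (u : V) (w : CliqueChain G 0)
    (hsupp : ∀ s : Finset V, ec w s ≠ 0 → ∀ x ∈ s, G.Adj u x)
    (hsum : ∑ ρ : CliqueSimplex G 0, w ρ = 0) :
    cliqueBoundary G 1 (cone u w) = w := by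
  funext β
  show cliqueBoundary G 1 (cone u w) β = w β
  by_cases hu : u ∈ β.1
  · have hβ : β.1 = {u} := by
      have := β.2.2
      obtain ⟨y, hy⟩ := Finset.card_eq_one.1 (β.2.2 : β.1.card = 1)
      rw [hy] at hu ⊢
      rw [Finset.mem_singleton.1 hu]
    have hwβ : w β = 0 := by
      by_contra hne
      exact G.loopless.irrefl u (hsupp β.1 (by rw [ec_simplex]; exact hne) u hu)
    rw [hwβ, boundary_eval (by omega) (cone u w) β, ← hsum, ← sum_singletons]
    refine Finset.sum_congr rfl fun x _ => ?_
    show ec (cone u w) (insert x β.1) = ec w {x}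
    rw [hβ, ec_cone]
    by_cases hxu : x = u
    · subst hxu
      rw [if_neg (by
        rintro ⟨-, hc, -⟩
        rw [Finset.insert_eq_self.2 (Finset.mem_singleton_self x), Finset.card_singleton] at hc
        omega), eq_comm]
      by_contra hne
      exact G.loopless.irrefl x (hsupp {x} hne x (Finset.mem_singleton_self x))
    · have herase : (insert x ({u} : Finset V)).erase u = {x} := by
        rw [Finset.erase_insert_of_ne hxu, Finset.erase_singleton]
        rfl
      by_cases hcl : G.IsClique ((insert x ({u} : Finset V) : Finset V) : Set V)
      · rw [if_pos ⟨hcl, by rw [Finset.card_insert_of_notMem (by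
          exact fun h => hxu (Finset.mem_singleton.1 h)), Finset.card_singleton], by simp⟩, herase]
      · rw [if_neg (by tauto), eq_comm]
        by_contra hne
        have hne' : ec w {x} ≠ 0 := hne
        have hadj := hsupp {x} hne' x (Finset.mem_singleton_self x)
        refine hcl ?_
        rw [show (insert x ({u} : Finset V)) = insert u ({x} : Finset V) from Finset.pair_comm x u]
        exact isClique_insert_of_adj (isClique_singleton' x) (fun y hy => by
          rw [Finset.mem_singleton.1 hy]; exact hadj)
  · exact cone_boundary_off u w hsupp β hu

end Toolkit3
section SmallCycles

attribute [local instance 2] Classical.propDecidable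
set_option linter.unusedSectionVars false

variable {V : Type} [Fintype V] [DecidableEq V] {G : SimpleGraph V} {n : ℕ}

lemma vsupp_zero_subset {A : Finset V} {m : ℕ} : vsupp (0 : CliqueChain G m) ⊆ A :=
  vsupp_subset fun s hs => absurd (ec_zero s) hs

lemma chain_add_self {m : ℕ} (f : CliqueChain G m) : f + f = 0 := by
  funext σ
  show f σ + f σ = 0
  exact CharTwo.add_self_eq_zero _

lemma val_add {m : ℕ} (f g : CliqueChain G m) (σ : CliqueSimplex G m) :
    (f + g) σ = f σ + g σ := rfl

lemma zoff_eq (u : V) (z : CliqueChain G (n + 1)) :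
    zoff u z = z + cone u (lnk u z) := by
  have h := decomp u z
  funext σ
  have h' : z σ = cone u (lnk u z) σ + zoff u z σ := by
    rw [← val_add]; exact congrFun h σ
  show zoff u z σ = (z + cone u (lnk u z)) σ
  rw [val_add, h', add_comm (cone u (lnk u z) σ) (zoff u z σ), add_assoc,
    CharTwo.add_self_eq_zero, add_zero]

lemma cone_lnk_boundary (u : V) (z : CliqueChain G (n + 1))
    (hcyc : cliqueBoundary G (n + 1) z = 0)
    (hsum : ∀ _ : n = 0, ∑ x : V, ec (lnk u z) {x} = 0) :
    cliqueBoundary G (n + 1) (cone u (lnk u z)) = lnk u z := by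
  have hsupp : ∀ s : Finset V, ec (lnk u z) s ≠ 0 → ∀ x ∈ s, G.Adj u x :=
    fun s hs => (vsupp_lnk u z s hs).2.2
  cases n with
  | zero => exact cone_boundary_full_zero u (lnk u z) hsupp (by rw [← sum_singletons]; exact hsum rfl)
  | succ p => exact cone_boundary_full_succ u (lnk u z) hsupp (lnk_cycle u z hcyc)

/-- Inner recursion for the small-cycle lemma: given that all small cycles one
dimension down bound, every cycle on at most `2(n+1)+1` vertices bounds. -/
lemma innerRec (n : ℕ)
    (Hlink : ∀ w : CliqueChain G n, cliqueBoundary G n w = 0 →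
      (vsupp w).card ≤ 2 * n + 1 → (∀ _ : n = 0, ∑ x : V, ec w {x} = 0) →
      ∃ c : CliqueChain G (n + 1), cliqueBoundary G (n + 1) c = w ∧ vsupp c ⊆ vsupp w) :
    ∀ N : ℕ, ∀ z : CliqueChain G (n + 1), (vsupp z).card ≤ N →
      cliqueBoundary G (n + 1) z = 0 → (vsupp z).card ≤ 2 * (n + 1) + 1 →
      ∃ b : CliqueChain G (n + 2), cliqueBoundary G (n + 2) b = z ∧ vsupp b ⊆ vsupp z := by
  intro N
  induction N with
  | zero =>
    intro z hN _ _
    have hz : z = 0 := eq_zero_of_vsupp_empty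
      (Finset.card_eq_zero.1 (le_antisymm hN (Nat.zero_le _)))
    exact ⟨0, by rw [hz]; exact map_zero _, vsupp_zero_subset⟩
  | succ N IH =>
    intro z hN hcyc hsmall
    by_cases hemp : vsupp z = ∅
    · have hz : z = 0 := eq_zero_of_vsupp_empty hemp
      exact ⟨0, by rw [hz]; exact map_zero _, vsupp_zero_subset⟩
    obtain ⟨u, hu⟩ := Finset.nonempty_iff_ne_empty.2 hemp
    have hsuppw := vsupp_lnk u z
    have hadjw : ∀ s : Finset V, ec (lnk u z) s ≠ 0 → ∀ x ∈ s, G.Adj u x :=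
      fun s hs => (hsuppw s hs).2.2
    have hwcyc : cliqueBoundary G n (lnk u z) = 0 := by
      cases n with
      | zero => exact boundary_zero_dim _
      | succ p => exact lnk_cycle u z hcyc
    have hwsum : ∀ _ : n = 0, ∑ x : V, ec (lnk u z) {x} = 0 := by
      rintro rfl
      rw [sum_singletons]
      exact sum_lnk u z hcyc
    by_cases hstar : ∀ x ∈ vsupp z, x = u ∨ G.Adj u x
    · -- star case: `z` is the boundary of the cone on its off-`u` part
      have hsupp' : ∀ s : Finset V, ec (zoff u z) s ≠ 0 → ∀ x ∈ s, G.Adj u x := by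
        intro s hs x hx
        rw [ec_zoff] at hs
        by_cases h1 : u ∈ s
        · rw [if_pos h1] at hs; exact absurd rfl hs
        · rw [if_neg h1] at hs
          rcases hstar x (subset_vsupp hs hx) with rfl | h2
          · exact absurd hx h1
          · exact h2
      refine ⟨cone u (zoff u z), ?_, ?_⟩
      · funext β
        show cliqueBoundary G (n + 2) (cone u (zoff u z)) β = z β
        by_cases huβ : u ∈ β.1
        · rw [cone_boundary_mem u (zoff u z) hsupp' β huβ]
          have hzb : cliqueBoundary G (n + 1) (zoff u z)
              = cliqueBoundary G (n + 1) (cone u (lnk u z)) := by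
            rw [zoff_eq u z, map_add, hcyc, zero_add]
          rw [hzb, cone_lnk_boundary u z hcyc hwsum]
          have hecl : G.IsClique ((β.1.erase u : Finset V) : Set V) :=
            isClique_of_subset (Finset.erase_subset u β.1) β.2.1
          have hcer : (β.1.erase u).card = n + 1 := by
            rw [Finset.card_erase_of_mem huβ, β.2.2]; omega
          rw [ec_clique _ ⟨hecl, hcer⟩]
          show (if u ∉ β.1.erase u then ec z (insert u (β.1.erase u)) else 0) = z β
          rw [if_pos (Finset.notMem_erase u β.1), Finset.insert_erase huβ, ec_simplex]
        · rw [cone_boundary_off u (zoff u z) hsupp' β huβ, zoff_of_not_mem huβ]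
      · refine Finset.Subset.trans (vsupp_cone u (zoff u z)) ?_
        intro x hx
        rcases Finset.mem_insert.1 hx with rfl | hx
        · exact hu
        · exact Finset.erase_subset _ _ (vsupp_zoff u z hx)
    · -- non-star case
      push_neg at hstar
      obtain ⟨x0, hx0, hx0u, hx0adj⟩ := hstar
      have hwsub : vsupp (lnk u z) ⊆ ((vsupp z).erase x0).erase u := by
        refine vsupp_subset fun s hs y hy => ?_
        obtain ⟨h1, h2, h3⟩ := hsuppw s hs
        refine Finset.mem_erase.2 ⟨fun h => h1 (h ▸ hy), Finset.mem_erase.2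
          ⟨fun h => hx0adj (h ▸ h3 y hy), h2 hy⟩⟩
      have hcardw : (vsupp (lnk u z)).card ≤ 2 * n + 1 := by
        have h1 := Finset.card_le_card hwsub
        have h2 : u ∈ (vsupp z).erase x0 := Finset.mem_erase.2 ⟨fun h => hx0u h.symm, hu⟩
        rw [Finset.card_erase_of_mem h2, Finset.card_erase_of_mem hx0] at h1
        omega
      obtain ⟨c, hc, hcsupp⟩ := Hlink (lnk u z) hwcyc hcardw hwsum
      have hadjc : ∀ s : Finset V, ec c s ≠ 0 → ∀ x ∈ s, G.Adj u x := by
        intro s hs x hx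
        obtain ⟨s', hs', hxs'⟩ := mem_vsupp.1 (hcsupp (subset_vsupp hs hx))
        exact hadjw s' hs' x hxs'
      have hconec_off : ∀ β : CliqueSimplex G (n + 1), u ∉ β.1 →
          cliqueBoundary G (n + 2) (cone u c) β = c β :=
        fun β hβ => cone_boundary_off u c hadjc β hβ
      have hz2cyc : cliqueBoundary G (n + 1) (zoff u z + c) = 0 := by
        rw [map_add, zoff_eq u z, map_add, hcyc, zero_add,
          cone_lnk_boundary u z hcyc hwsum, hc, chain_add_self]
      have hsuppz2 : vsupp (zoff u z + c) ⊆ (vsupp z).erase u := by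
        refine Finset.Subset.trans (vsupp_add _ _) (Finset.union_subset (vsupp_zoff u z) ?_)
        refine Finset.Subset.trans hcsupp ?_
        refine vsupp_subset fun s hs y hy => ?_
        obtain ⟨h1, h2, _⟩ := hsuppw s hs
        exact Finset.mem_erase.2 ⟨fun h => h1 (h ▸ hy), h2 hy⟩
      have hcard2 : (vsupp (zoff u z + c)).card ≤ N := by
        have h1 := Finset.card_le_card hsuppz2
        rw [Finset.card_erase_of_mem hu] at h1
        omega
      obtain ⟨b2, hb2, hb2supp⟩ := IH (zoff u z + c) hcard2 hz2cyc
        (le_trans (le_trans (Finset.card_le_card hsuppz2)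
          (Finset.card_le_card (Finset.erase_subset _ _))) hsmall)
      refine ⟨b2 + cone u c, ?_, ?_⟩
      · rw [map_add, hb2]
        funext β
        rw [val_add]
        show (zoff u z + c) β + cliqueBoundary G (n + 2) (cone u c) β = z β
        by_cases huβ : u ∈ β.1
        · have hcβ : c β = 0 := by
            by_contra hne
            exact G.loopless.irrefl u (hadjc β.1 (by rw [ec_simplex]; exact hne) u huβ)
          have hz2β : (zoff u z + c) β = 0 := by
            rw [val_add, hcβ, add_zero]
            exact if_pos huβ
          rw [hz2β, zero_add, cone_boundary_mem u c hadjc β huβ, hc]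
          have h3 := decomp u z
          have h4 : z β = cone u (lnk u z) β + zoff u z β := by rw [← val_add, ← h3]
          rw [h4, show zoff u z β = 0 from if_pos huβ, add_zero]
          show ec (lnk u z) (β.1.erase u) = cone u (lnk u z) β
          rw [show cone u (lnk u z) β = if u ∈ β.1 then ec (lnk u z) (β.1.erase u) else 0 from rfl,
            if_pos huβ]
        · rw [hconec_off β huβ, val_add, zoff_of_not_mem huβ, add_assoc,
            CharTwo.add_self_eq_zero (c β), add_zero]
      · refine Finset.Subset.trans (vsupp_add _ _) (Finset.union_subset ?_ ?_)
        · exact Finset.Subset.trans hb2supp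
            (Finset.Subset.trans hsuppz2 (Finset.erase_subset _ _))
        · refine Finset.Subset.trans (vsupp_cone u c) ?_
          intro x hx
          rcases Finset.mem_insert.1 hx with rfl | hx
          · exact hu
          · obtain ⟨s', hs', hxs'⟩ := mem_vsupp.1 (hcsupp hx)
            exact (hsuppw s' hs').2.1 hxs'

/-- Small 0-chains with zero sum vanish. -/
lemma zero_chain_small (w : CliqueChain G 0) (hcard : (vsupp w).card ≤ 1)
    (hsum : ∑ x : V, ec w {x} = 0) : w = 0 := by
  by_contra hne
  obtain ⟨ρ, hρ⟩ := Function.ne_iff.1 hne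
  have hρ' : w ρ ≠ 0 := hρ
  have hsingle : ∀ ρ' : CliqueSimplex G 0, ρ' ≠ ρ → w ρ' = 0 := by
    intro ρ' hne'
    by_contra hne''
    obtain ⟨y, hy⟩ := Finset.card_eq_one.1 ρ.2.2
    obtain ⟨y', hy'⟩ := Finset.card_eq_one.1 ρ'.2.2
    have hmem : y ∈ vsupp w := subset_vsupp (by rw [ec_simplex]; exact hρ') (by
      rw [hy]; exact Finset.mem_singleton_self y)
    have hmem' : y' ∈ vsupp w := subset_vsupp (by rw [ec_simplex]; exact hne'') (by
      rw [hy']; exact Finset.mem_singleton_self y')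
    have hyy : y ≠ y' := by
      rintro rfl
      exact hne' (Subtype.ext (by rw [hy, hy']))
    have : 1 < (vsupp w).card := Finset.one_lt_card.2 ⟨y, hmem, y', hmem', hyy⟩
    omega
  rw [sum_singletons, Fintype.sum_eq_single ρ hsingle] at hsum
  exact hρ' hsum

/-- **The small-cycle lemma**: a cycle supported on at most `2k + 1` vertices is a
boundary (of a chain supported on the same vertex set). -/
lemma smallP : ∀ n : ℕ, ∀ z : CliqueChain G (n + 1), cliqueBoundary G (n + 1) z = 0 →
    (vsupp z).card ≤ 2 * (n + 1) + 1 →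
    ∃ b : CliqueChain G (n + 2), cliqueBoundary G (n + 2) b = z ∧ vsupp b ⊆ vsupp z := by
  intro n
  induction n with
  | zero =>
    intro z hcyc hcard
    refine innerRec 0 ?_ (vsupp z).card z le_rfl hcyc hcard
    intro w _ hcardw hsum
    have hw : w = 0 := zero_chain_small w (by omega) (hsum rfl)
    exact ⟨0, by rw [hw]; exact map_zero _, vsupp_zero_subset⟩
  | succ p IH =>
    intro z hcyc hcard
    refine innerRec (p + 1) ?_ (vsupp z).card z le_rfl hcyc hcard
    intro w hwcyc hwcard _
    exact IH w hwcyc hwcard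

end SmallCycles
section Glue

attribute [local instance 2] Classical.propDecidable
set_option linter.unusedSectionVars false

variable {V : Type} [Fintype V] [DecidableEq V] {G G' : SimpleGraph V}

lemma exists_nonbounding {q : ℕ} (h : 0 < cliqueBetti G q) :
    ∃ z : CliqueChain G q, cliqueBoundary G q z = 0 ∧
      z ∉ LinearMap.range (cliqueBoundary G (q + 1)) := by
  have hnt : Nontrivial
      (LinearMap.ker (cliqueBoundary G q) ⧸
        (LinearMap.range (cliqueBoundary G (q + 1))).comap
          (LinearMap.ker (cliqueBoundary G q)).subtype) :=
    Module.finrank_pos_iff.1 h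
  obtain ⟨e, he⟩ := exists_ne (0 : LinearMap.ker (cliqueBoundary G q) ⧸
      (LinearMap.range (cliqueBoundary G (q + 1))).comap
        (LinearMap.ker (cliqueBoundary G q)).subtype)
  obtain ⟨x, rfl⟩ := Submodule.Quotient.mk_surjective _ e
  refine ⟨x.1, x.2, fun hmem => he ?_⟩
  rw [Submodule.Quotient.mk_eq_zero]
  exact Submodule.mem_comap.2 hmem

lemma all_bounding {q : ℕ} (h : cliqueBetti G q = 0) :
    ∀ z : CliqueChain G q, cliqueBoundary G q z = 0 →
      z ∈ LinearMap.range (cliqueBoundary G (q + 1)) := by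
  intro z hz
  have hss : Subsingleton
      (LinearMap.ker (cliqueBoundary G q) ⧸
        (LinearMap.range (cliqueBoundary G (q + 1))).comap
          (LinearMap.ker (cliqueBoundary G q)).subtype) :=
    Module.finrank_zero_iff.1 h
  have hmk : (Submodule.Quotient.mk (⟨z, hz⟩ : LinearMap.ker (cliqueBoundary G q)) :
      LinearMap.ker (cliqueBoundary G q) ⧸
        (LinearMap.range (cliqueBoundary G (q + 1))).comap
          (LinearMap.ker (cliqueBoundary G q)).subtype) = 0 :=
    Subsingleton.elim _ _
  exact Submodule.mem_comap.1 ((Submodule.Quotient.mk_eq_zero _).1 hmk)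

/-- Extension of a chain on a subgraph by zero. -/
noncomputable def extChain (hle : G' ≤ G) {m : ℕ} (f : CliqueChain G' m) : CliqueChain G m :=
  fun σ => if h : G'.IsClique (σ.1 : Set V) then f ⟨σ.1, h, σ.2.2⟩ else 0

/-- Restriction of a chain to a subgraph. -/
noncomputable def resChain (hle : G' ≤ G) {m : ℕ} (z : CliqueChain G m) : CliqueChain G' m :=
  fun σ' => z ⟨σ'.1, σ'.2.1.mono hle, σ'.2.2⟩

lemma ec_extChain (hle : G' ≤ G) {m : ℕ} (f : CliqueChain G' m) (s : Finset V) :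
    ec (extChain hle f) s = ec f s := by
  unfold ec extChain
  by_cases h1 : G'.IsClique (s : Set V) ∧ s.card = m + 1
  · rw [dif_pos h1, dif_pos ⟨h1.1.mono hle, h1.2⟩, dif_pos h1.1]
  · rw [dif_neg h1]
    by_cases h2 : G.IsClique (s : Set V) ∧ s.card = m + 1
    · rw [dif_pos h2, dif_neg (fun h3 : G'.IsClique (s : Set V) => h1 ⟨h3, h2.2⟩)]
    · rw [dif_neg h2]

lemma extChain_simplex (hle : G' ≤ G) {m : ℕ} (f : CliqueChain G' m)
    (σ' : CliqueSimplex G' m) :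
    extChain hle f ⟨σ'.1, σ'.2.1.mono hle, σ'.2.2⟩ = f σ' := by
  show (if h : G'.IsClique (σ'.1 : Set V) then f ⟨σ'.1, h, σ'.2.2⟩ else 0) = f σ'
  rw [dif_pos σ'.2.1]
  rfl


lemma extChain_injective (hle : G' ≤ G) {m : ℕ} {f : CliqueChain G' m}
    (h : extChain hle f = 0) : f = 0 := by
  funext σ'
  have := congrFun h ⟨σ'.1, σ'.2.1.mono hle, σ'.2.2⟩
  rw [extChain_simplex hle f σ'] at this
  exact this

lemma extChain_boundary (hle : G' ≤ G) {m : ℕ} (hm : 1 ≤ m) (f : CliqueChain G' m) :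
    cliqueBoundary G m (extChain hle f) = extChain hle (cliqueBoundary G' m f) := by
  funext τ
  show cliqueBoundary G m (extChain hle f) τ = extChain hle (cliqueBoundary G' m f) τ
  rw [boundary_eval hm (extChain hle f) τ]
  by_cases h1 : G'.IsClique (τ.1 : Set V)
  · have h2 : extChain hle (cliqueBoundary G' m f) τ
        = cliqueBoundary G' m f ⟨τ.1, h1, τ.2.2⟩ := by
      show (if h : G'.IsClique (τ.1 : Set V)
        then cliqueBoundary G' m f ⟨τ.1, h, τ.2.2⟩ else 0) = _
      rw [dif_pos h1]
    rw [h2, boundary_eval hm f ⟨τ.1, h1, τ.2.2⟩]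
    exact Finset.sum_congr rfl fun x _ => ec_extChain hle f (insert x τ.1)
  · have h2 : extChain hle (cliqueBoundary G' m f) τ = 0 := by
      show (if h : G'.IsClique (τ.1 : Set V)
        then cliqueBoundary G' m f ⟨τ.1, h, τ.2.2⟩ else 0) = _
      rw [dif_neg h1]
    rw [h2]
    refine Finset.sum_eq_zero fun x _ => ?_
    rw [ec_extChain hle f]
    apply ec_of_ne
    rintro ⟨hc, -⟩
    exact h1 (hc.subset (by
      rw [Finset.coe_insert]
      exact Set.subset_insert x (τ.1 : Set V)))

lemma bound_transfer (hle : G' ≤ G) {n : ℕ} (hbetti : cliqueBetti G' (n + 1) = 0)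
    (z : CliqueChain G (n + 1)) (hz : cliqueBoundary G (n + 1) z = 0)
    (hsupp : ∀ σ : CliqueSimplex G (n + 1), z σ ≠ 0 → G'.IsClique (σ.1 : Set V)) :
    z ∈ LinearMap.range (cliqueBoundary G (n + 2)) := by
  have hext : extChain hle (resChain hle z) = z := by
    funext σ
    show (if h : G'.IsClique (σ.1 : Set V)
      then z ⟨σ.1, (SimpleGraph.IsClique.mono hle h), σ.2.2⟩ else 0) = z σ
    by_cases h1 : G'.IsClique (σ.1 : Set V)
    · rw [dif_pos h1]
      rfl
    · rw [dif_neg h1]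
      by_contra hne
      exact h1 (hsupp σ (fun h => hne h.symm))
  have hrescyc : cliqueBoundary G' (n + 1) (resChain hle z) = 0 := by
    apply extChain_injective hle
    rw [← extChain_boundary hle (by omega), hext, hz]
  obtain ⟨c, hc⟩ := all_bounding hbetti (resChain hle z) hrescyc
  refine ⟨extChain hle c, ?_⟩
  rw [extChain_boundary hle (by omega), hc, hext]

end Glue
section Main

attribute [local instance 2] Classical.propDecidable
set_option linter.unusedSectionVars false

variable {V : Type} [Fintype V] [DecidableEq V] {G : SimpleGraph V}

lemma getC (n : ℕ) (v : V) (z : CliqueChain G (n + 1))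
    (hzcyc : cliqueBoundary G (n + 1) z = 0)
    (hcardw : (vsupp (lnk v z)).card ≤ 2 * n + 1) :
    ∃ c : CliqueChain G (n + 1), cliqueBoundary G (n + 1) c = lnk v z ∧
      vsupp c ⊆ vsupp (lnk v z) := by
  cases n with
  | zero =>
    have hs : ∑ x : V, ec (lnk v z) {x} = 0 := by
      rw [sum_singletons]; exact sum_lnk v z hzcyc
    have hw : lnk v z = 0 := zero_chain_small _ (by omega) hs
    exact ⟨0, by rw [hw]; exact map_zero _, vsupp_zero_subset⟩
  | succ p => exact smallP p (lnk v z) (lnk_cycle v z hzcyc) (by omega)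

lemma reconstruct (n : ℕ) (u : V) (z : CliqueChain G (n + 1))
    (hcyc : cliqueBoundary G (n + 1) z = 0)
    (c : CliqueChain G (n + 1)) (hc : cliqueBoundary G (n + 1) c = lnk u z)
    (hadjc : ∀ s : Finset V, ec c s ≠ 0 → ∀ x ∈ s, G.Adj u x)
    (b : CliqueChain G (n + 2)) (hb : cliqueBoundary G (n + 2) b = zoff u z + c) :
    cliqueBoundary G (n + 2) (b + cone u c) = z := by
  rw [map_add, hb]
  funext β
  rw [val_add]
  show (zoff u z + c) β + cliqueBoundary G (n + 2) (cone u c) β = z β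
  by_cases huβ : u ∈ β.1
  · have hcβ : c β = 0 := by
      by_contra hne
      exact G.loopless.irrefl u (hadjc β.1 (by rw [ec_simplex]; exact hne) u huβ)
    have hz2β : (zoff u z + c) β = 0 := by
      rw [val_add, hcβ, add_zero]
      exact if_pos huβ
    rw [hz2β, zero_add, cone_boundary_mem u c hadjc β huβ, hc]
    have h3 := decomp u z
    have h4 : z β = cone u (lnk u z) β + zoff u z β := by rw [← val_add, ← h3]
    rw [h4, show zoff u z β = 0 from if_pos huβ, add_zero]
    show ec (lnk u z) (β.1.erase u) = cone u (lnk u z) β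
    rw [show cone u (lnk u z) β = if u ∈ β.1 then ec (lnk u z) (β.1.erase u) else 0 from rfl,
      if_pos huβ]
  · rw [cone_boundary_off u c hadjc β huβ, val_add, zoff_of_not_mem huβ, add_assoc,
      CharTwo.add_self_eq_zero (c β), add_zero]

end Main

/-- Gal–Kahle's theorem on minimal clique cycles: if the clique complex `X` of a
finite simple graph `G` is `q`-clique-minimal for some `q ≥ 1`, i.e. `β_q(X) > 0`
while every proper clique subcomplex (the clique complex of a proper subgraph `H ≠ ⊤`
of `G`) has vanishing `q`-th Betti number, then every vertex of `X` has degree at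
least `2q` in the 1-skeleton, and `X` has at least `2q + 2` vertices. -/
theorem cliqueMinimal_degree_and_card
    {V : Type} [Fintype V] [DecidableEq V] (G : SimpleGraph V) (q : ℕ) (hq : 1 ≤ q)
    (hpos : 0 < cliqueBetti G q)
    (hmin : ∀ H : G.Subgraph, H ≠ ⊤ → cliqueBetti H.spanningCoe q = 0) :
    (∀ v : V, 2 * q ≤ (G.neighborSet v).ncard) ∧ 2 * q + 2 ≤ Fintype.card V := by
  classical
  obtain ⟨n, rfl⟩ : ∃ n, q = n + 1 := ⟨q - 1, by omega⟩
  obtain ⟨z, hzcyc, hznb⟩ := exists_nonbounding hpos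
  have hcardbound : 2 * (n + 1) + 2 ≤ Fintype.card V := by
    by_contra hcard
    obtain ⟨b, hb, -⟩ := smallP n z hzcyc (by
      have h1 := Finset.card_le_univ (vsupp z)
      have h2 : (Finset.univ : Finset V).card = Fintype.card V := Finset.card_univ
      omega)
    exact hznb ⟨b, hb⟩
  refine ⟨?_, hcardbound⟩
  intro v
  by_cases hiso : G.neighborSet v = ∅
  · exfalso
    have hedge : ∀ {a b : V}, G.Adj a b → a ∈ ({v}ᶜ : Set V) := by
      intro a b hab
      simp only [Set.mem_compl_iff, Set.mem_singleton_iff]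
      rintro rfl
      have h1 : b ∈ G.neighborSet a := hab
      rw [hiso] at h1
      exact h1
    set H' : G.Subgraph :=
      { verts := ({v} : Set V)ᶜ
        Adj := G.Adj
        adj_sub := id
        edge_vert := hedge
        symm := G.symm } with hH'
    have hne : H' ≠ ⊤ := by
      intro h
      have hv : v ∈ H'.verts := by
        rw [h, SimpleGraph.Subgraph.verts_top]
        trivial
      rw [hH'] at hv
      exact hv rfl
    have h0 := hmin _ hne
    have hcoe : H'.spanningCoe = G := by
      ext a b
      exact Iff.rfl
    rw [hcoe] at h0
    omega
  · obtain ⟨v', hv'⟩ := Set.nonempty_iff_ne_empty.2 hiso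
    have hvv' : G.Adj v v' := hv'
    set Hv : G.Subgraph :=
      { verts := Set.univ
        Adj := fun a b => G.Adj a b ∧ a ≠ v ∧ b ≠ v
        adj_sub := fun h => h.1
        edge_vert := fun _ => Set.mem_univ _
        symm := ⟨fun a b h => ⟨h.1.symm, h.2.2, h.2.1⟩⟩ } with hHv
    have hne : Hv ≠ ⊤ := by
      intro h
      have h2 : Hv.Adj v v' := by rw [h]; exact SimpleGraph.Subgraph.top_adj.2 hvv'
      exact h2.2.1 rfl
    have hle : Hv.spanningCoe ≤ G := SimpleGraph.Subgraph.spanningCoe_le Hv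
    have hbetti := hmin Hv hne
    have havoid : ∀ y : CliqueChain G (n + 1), cliqueBoundary G (n + 1) y = 0 →
        v ∉ vsupp y → y ∈ LinearMap.range (cliqueBoundary G (n + 2)) := by
      intro y hy hvy
      refine bound_transfer hle hbetti y hy ?_
      intro σ hσ
      have hclique := σ.2.1
      have hvnot : v ∉ σ.1 := fun hmem =>
        hvy (subset_vsupp (by rw [ec_simplex]; exact hσ) hmem)
      intro a ha b hb hab
      exact ⟨hclique ha hb hab, fun h => hvnot (Finset.mem_coe.1 (h ▸ ha)),
        fun h => hvnot (Finset.mem_coe.1 (h ▸ hb))⟩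
    by_contra hdeg
    have hNF : (vsupp (lnk v z)).card ≤ 2 * n + 1 := by
      have hsubNF : vsupp (lnk v z)
          ⊆ Set.Finite.toFinset (Set.toFinite (G.neighborSet v)) := by
        refine vsupp_subset fun s hs x hx => ?_
        rw [Set.Finite.mem_toFinset]
        exact (vsupp_lnk v z s hs).2.2 x hx
      have h1 := Finset.card_le_card hsubNF
      rw [← Set.ncard_eq_toFinset_card (G.neighborSet v) (Set.toFinite _)] at h1
      omega
    obtain ⟨c, hc, hcsupp⟩ := getC n v z hzcyc hNF
    have hadjc : ∀ s : Finset V, ec c s ≠ 0 → ∀ x ∈ s, G.Adj v x := by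
      intro s hs x hx
      obtain ⟨s', hs', hxs'⟩ := mem_vsupp.1 (hcsupp (subset_vsupp hs hx))
      exact (vsupp_lnk v z s' hs').2.2 x hxs'
    have hwsum : ∀ _ : n = 0, ∑ x : V, ec (lnk v z) {x} = 0 := by
      rintro rfl
      rw [sum_singletons]
      exact sum_lnk v z hzcyc
    have hz2cyc : cliqueBoundary G (n + 1) (zoff v z + c) = 0 := by
      rw [map_add, zoff_eq v z, map_add, hzcyc, zero_add,
        cone_lnk_boundary v z hzcyc hwsum, hc, chain_add_self]
    have hz2nov : v ∉ vsupp (zoff v z + c) := by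
      intro hmem
      rcases Finset.mem_union.1 (vsupp_add _ _ hmem) with h | h
      · exact (Finset.mem_erase.1 (vsupp_zoff v z h)).1 rfl
      · obtain ⟨s', hs', hvs'⟩ := mem_vsupp.1 (hcsupp h)
        exact (vsupp_lnk v z s' hs').1 hvs'
    obtain ⟨b, hb⟩ := havoid _ hz2cyc hz2nov
    exact hznb ⟨b + cone v c, reconstruct n v z hzcyc c hc hadjc b hb⟩
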